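/- If R is an RK-tensor, then 4S*(X,Y) = S(X,Y) + 3S'(X,Y) for all X,Y ∈ V. -/

import Mathlib

open RealInnerProductSpace
open scoped BigOperators

noncomputable section

/-- A (curried) 4-linear form on `V`. -/
abbrev Tensor4 (V : Type*) [NormedAddCommGroup V] [InnerProductSpace ℝ V] :=
  V →ₗ[ℝ] V →ₗ[ℝ] V →ₗ[ℝ] V →ₗ[ℝ] ℝ

variable {V : Type*} [NormedAddCommGroup V] [InnerProductSpace ℝ V]

/-- `J` is an orthogonal complex structure: `J ∘ J = -id` and `g(JX, JY) = g(X, Y)`. -/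
def OrthJ (J : V →ₗ[ℝ] V) : Prop :=
  (∀ X : V, J (J X) = -X) ∧ (∀ X Y : V, ⟪J X, J Y⟫ = ⟪X, Y⟫)

/-- `R` is a curvature-like tensor. -/
def CurvatureLike (R : Tensor4 V) : Prop :=
  (∀ X Y Z U : V, R X Y Z U = - R Y X Z U) ∧
  (∀ X Y Z U : V, R X Y Z U = - R X Y U Z) ∧
  (∀ X Y Z U : V, R X Y Z U = R Z U X Y) ∧
  (∀ X Y Z U : V, R X Y Z U + R Y Z X U + R Z X Y U = 0)

/-- `R` is an RK-tensor: `R(X,Y,Z,U) = R(JX,JY,JZ,JU)`. -/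
def IsRK (J : V →ₗ[ℝ] V) (R : Tensor4 V) : Prop :=
  ∀ X Y Z U : V, R X Y Z U = R (J X) (J Y) (J Z) (J U)

/-- The tensor `R*` associated to `R` and `J`. -/
def Rstar (J : V →ₗ[ℝ] V) (R : Tensor4 V) (X Y Z U : V) : ℝ :=
  (3 / 16) * (R X Y Z U + R X Y (J Z) (J U) + R (J X) (J Y) Z U +
      R (J X) (J Y) (J Z) (J U)) +
  (1 / 16) * (R (J X) (J Z) Y U - R (J Y) (J Z) X U + R X Z (J Y) (J U) -
      R Y Z (J X) (J U) + R Y (J Z) (J X) U - R X (J Z) (J Y) U +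
      R (J Y) Z X (J U) - R (J X) Z Y (J U))

variable {ι : Type*} [Fintype ι]

/-- The Ricci form `S(X,Y) = Σᵢ R(X,Eᵢ,Eᵢ,Y)`. -/
def ric (b : OrthonormalBasis ι ℝ V) (R : Tensor4 V) (X Y : V) : ℝ :=
  ∑ i, R X (b i) (b i) Y

/-- `S'(X,Y) = Σᵢ R(X,Eᵢ,JEᵢ,JY)`. -/
def ric' (J : V →ₗ[ℝ] V) (b : OrthonormalBasis ι ℝ V) (R : Tensor4 V) (X Y : V) : ℝ :=
  ∑ i, R X (b i) (J (b i)) (J Y)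

/-- `S*(X,Y) = Σᵢ R*(X,Eᵢ,Eᵢ,Y)`. -/
def ricStar (J : V →ₗ[ℝ] V) (b : OrthonormalBasis ι ℝ V) (R : Tensor4 V) (X Y : V) : ℝ :=
  ∑ i, Rstar J R X (b i) (b i) Y

/-- The scalar curvature `τ = Σᵢ S(Eᵢ,Eᵢ)`. -/
def scal (b : OrthonormalBasis ι ℝ V) (R : Tensor4 V) : ℝ :=
  ∑ i, ric b R (b i) (b i)

/-- `τ' = Σᵢ S'(Eᵢ,Eᵢ)`. -/
def scal' (J : V →ₗ[ℝ] V) (b : OrthonormalBasis ι ℝ V) (R : Tensor4 V) : ℝ :=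
  ∑ i, ric' J b R (b i) (b i)

/-- `τ* = Σᵢ S*(Eᵢ,Eᵢ)`. -/
def scalStar (J : V →ₗ[ℝ] V) (b : OrthonormalBasis ι ℝ V) (R : Tensor4 V) : ℝ :=
  ∑ i, ricStar J b R (b i) (b i)

/-- The operator `φ` applied to a bilinear form `Q`. -/
def phi (Q : V → V → ℝ) (X Y Z U : V) : ℝ :=
  ⟪X, U⟫ * Q Y Z - ⟪X, Z⟫ * Q Y U + ⟪Y, Z⟫ * Q X U - ⟪Y, U⟫ * Q X Z

/-- The operator `ψ` applied to a bilinear form `Q`. -/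
def psi (J : V →ₗ[ℝ] V) (Q : V → V → ℝ) (X Y Z U : V) : ℝ :=
  ⟪X, J U⟫ * Q Y (J Z) - ⟪X, J Z⟫ * Q Y (J U) - 2 * ⟪X, J Y⟫ * Q Z (J U) +
  ⟪Y, J Z⟫ * Q X (J U) - ⟪Y, J U⟫ * Q X (J Z) - 2 * ⟪Z, J U⟫ * Q X (J Y)

/-- `π₁(X,Y,Z,U) = g(X,U)g(Y,Z) − g(X,Z)g(Y,U)`. -/
def pi1 (X Y Z U : V) : ℝ :=
  ⟪X, U⟫ * ⟪Y, Z⟫ - ⟪X, Z⟫ * ⟪Y, U⟫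

/-- `π₂(X,Y,Z,U) = g(X,JU)g(Y,JZ) − g(X,JZ)g(Y,JU) − 2g(X,JY)g(Z,JU)`. -/
def pi2 (J : V →ₗ[ℝ] V) (X Y Z U : V) : ℝ :=
  ⟪X, J U⟫ * ⟪Y, J Z⟫ - ⟪X, J Z⟫ * ⟪Y, J U⟫ - 2 * ⟪X, J Y⟫ * ⟪Z, J U⟫

/-- The generalized Bochner curvature tensor `B*`. -/
def Bstar (m : ℕ) (J : V →ₗ[ℝ] V) (b : OrthonormalBasis ι ℝ V) (R : Tensor4 V)
    (X Y Z U : V) : ℝ :=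
  Rstar J R X Y Z U
    - (1 / (2 * ((m : ℝ) + 2))) *
        (phi (ricStar J b R) X Y Z U + psi J (ricStar J b R) X Y Z U)
    + (scalStar J b R / (4 * ((m : ℝ) + 1) * ((m : ℝ) + 2))) *
        (pi1 X Y Z U + pi2 J X Y Z U)

/-- The Bochner curvature tensor `B` of an RK-tensor. -/
def Bochner (m : ℕ) (J : V →ₗ[ℝ] V) (b : OrthonormalBasis ι ℝ V) (R : Tensor4 V)
    (X Y Z U : V) : ℝ :=
  R X Y Z U
    - (1 / (8 * ((m : ℝ) + 2))) *
        (phi (fun x y => ric b R x y + 3 * ric' J b R x y) X Y Z U +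
         psi J (fun x y => ric b R x y + 3 * ric' J b R x y) X Y Z U)
    - (1 / (8 * ((m : ℝ) - 2))) *
        (3 * phi (fun x y => ric b R x y - ric' J b R x y) X Y Z U -
         psi J (fun x y => ric b R x y - ric' J b R x y) X Y Z U)
    + ((scal b R + 3 * scal' J b R) / (16 * ((m : ℝ) + 1) * ((m : ℝ) + 2))) *
        (pi1 X Y Z U + pi2 J X Y Z U)
    + ((scal b R - scal' J b R) / (16 * ((m : ℝ) - 1) * ((m : ℝ) - 2))) *
        (3 * pi1 X Y Z U - pi2 J X Y Z U)


/-- Auxiliary: the trace of a bilinear form is independent of orthonormal basis. -/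
lemma trace_indep_aux {ι : Type*} [Fintype ι] (B : V →ₗ[ℝ] V →ₗ[ℝ] ℝ)
    (b b' : OrthonormalBasis ι ℝ V) :
    ∑ i, B (b i) (b i) = ∑ i, B (b' i) (b' i) := by
  classical
  have h : ∀ i, B (b i) (b i)
      = ∑ j, ∑ k, (⟪b' j, b i⟫ * ⟪b' k, b i⟫) * B (b' j) (b' k) := by
    intro i
    conv_lhs => rw [← b'.sum_repr' (b i)]
    simp only [map_sum, LinearMap.sum_apply, map_smul, LinearMap.smul_apply, smul_eq_mul,
      Finset.mul_sum]
    rw [Finset.sum_comm]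
    exact Finset.sum_congr rfl fun _ _ => Finset.sum_congr rfl fun _ _ => by ring
  rw [Finset.sum_congr rfl fun i _ => h i, Finset.sum_comm]
  have key : ∀ j k : ι, (∑ i, ⟪b' j, b i⟫ * ⟪b' k, b i⟫) = if j = k then (1:ℝ) else 0 := by
    intro j k
    have h1 := b.sum_inner_mul_inner (b' j) (b' k)
    have h2 : ⟪b' j, b' k⟫ = if j = k then (1:ℝ) else 0 :=
      orthonormal_iff_ite.mp b'.orthonormal j k
    rw [← h2, ← h1]
    exact Finset.sum_congr rfl fun i _ => by rw [real_inner_comm (b i) (b' k)]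
  calc ∑ j, ∑ i, ∑ k, (⟪b' j, b i⟫ * ⟪b' k, b i⟫) * B (b' j) (b' k)
      = ∑ j, ∑ k, (∑ i, ⟪b' j, b i⟫ * ⟪b' k, b i⟫) * B (b' j) (b' k) := by
        refine Finset.sum_congr rfl fun j _ => ?_
        rw [Finset.sum_comm]
        exact Finset.sum_congr rfl fun k _ => by rw [Finset.sum_mul]
    _ = ∑ j, B (b' j) (b' j) := by
        refine Finset.sum_congr rfl fun j _ => ?_
        simp [key, Finset.sum_ite_eq']

/-- Auxiliary: the isometry determined by an orthogonal complex structure. -/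
def myIsoJ (J : V →ₗ[ℝ] V) (hJ : OrthJ J) : V ≃ₗᵢ[ℝ] V :=
  LinearEquiv.isometryOfInner
    (LinearEquiv.ofLinear J (-J)
      (by ext x; simp [hJ.1 x])
      (by ext x; simp [hJ.1 x]))
    (fun x y => hJ.2 x y)

lemma myIsoJ_apply (J : V →ₗ[ℝ] V) (hJ : OrthJ J) (x : V) : myIsoJ J hJ x = J x := rfl

/-- Auxiliary bilinear form `(u,v) ↦ R X u v Y`. -/
def bilinA (R : Tensor4 V) (X Y : V) : V →ₗ[ℝ] V →ₗ[ℝ] ℝ :=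
  LinearMap.mk₂ ℝ (fun u v => R X u v Y)
    (fun u u' v => by simp) (fun c u v => by simp) (fun u v v' => by simp)
    (fun c u v => by simp)

/-- Auxiliary bilinear form `(u,v) ↦ R X (J u) v (J Y)`. -/
def bilinB (R : Tensor4 V) (J : V →ₗ[ℝ] V) (X Y : V) : V →ₗ[ℝ] V →ₗ[ℝ] ℝ :=
  LinearMap.mk₂ ℝ (fun u v => R X (J u) v (J Y))
    (fun u u' v => by simp) (fun c u v => by simp) (fun u v v' => by simp)
    (fun c u v => by simp)

/-- Pointwise reduction of `R*(X,e,e,Y)` for an RK-tensor. -/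
lemma rstar_pointwise (J : V →ₗ[ℝ] V) (hJ : OrthJ J) (R : Tensor4 V)
    (hR : CurvatureLike R) (hRK : IsRK J R) (X Y e : V) :
    8 * Rstar J R X e e Y =
      3 * R X e e Y + 5 * R X e (J e) (J Y) - R X (J e) e (J Y)
        - R X (J e) (J e) Y := by
  obtain ⟨hA1, hA2, hP, hB⟩ := hR
  obtain ⟨hJJ, _⟩ := hJ
  have h1 := hRK X e (J e) (J Y)
  have h2 := hRK X e e Y
  have h3 := hA1 (J e) (J e) X Y
  have h4 := hA1 e e (J X) (J Y)
  have h5 := hB e (J e) (J X) Y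
  have h6 := hA1 (J e) (J X) e Y
  have h7 := hRK (J X) e (J e) Y
  have h8 := hRK (J e) e X (J Y)
  have h9 := hRK (J X) e e (J Y)
  have hRn : ∀ a b c d : V, R (-a) b c d = -R a b c d := fun a b c d => by
    rw [show -a = (-1 : ℝ) • a by simp, map_smul]
    simp only [LinearMap.smul_apply, smul_eq_mul]
    ring
  simp only [hJJ, map_neg, hRn, LinearMap.neg_apply, neg_neg] at h1 h2 h3 h4 h5 h6 h7 h8 h9
  simp only [Rstar]
  linarith

/-- for an RK-tensor, `4S* = S + 3S'`. -/
theorem four_ricStar_of_RK {V : Type*} [NormedAddCommGroup V] [InnerProductSpace ℝ V]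
    [FiniteDimensional ℝ V] {m : ℕ} (hm : 1 ≤ m) (hdim : Module.finrank ℝ V = 2 * m)
    (J : V →ₗ[ℝ] V) (hJ : OrthJ J) (R : Tensor4 V) (hR : CurvatureLike R)
    (hRK : IsRK J R) (b : OrthonormalBasis (Fin (2 * m)) ℝ V) :
    ∀ X Y : V, 4 * ricStar J b R X Y = ric b R X Y + 3 * ric' J b R X Y := by
  intro X Y
  set b' : OrthonormalBasis (Fin (2 * m)) ℝ V := b.map (myIsoJ J hJ) with hb'
  have hb'app : ∀ i, b' i = J (b i) := fun i => b.map_apply (myIsoJ J hJ) i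
  -- Fact 1 : ∑ R X (J E) (J E) Y = ric
  have F1 : ∑ i, R X (J (b i)) (J (b i)) Y = ric b R X Y := by
    have := trace_indep_aux (bilinA R X Y) b' b
    simpa [bilinA, ric, hb'app] using this
  -- Fact 2 : ∑ R X (J E) E (J Y) = - ric'
  have F2 : ∑ i, R X (J (b i)) (b i) (J Y) = - ric' J b R X Y := by
    have := trace_indep_aux (bilinB R J X Y) b b'
    simp only [bilinB, LinearMap.mk₂_apply, hb'app, hJ.1] at this
    simp only [map_neg, LinearMap.neg_apply] at this
    rw [this, ric', ← Finset.sum_neg_distrib]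
  have hpt : ∀ i : Fin (2 * m), 8 * Rstar J R X (b i) (b i) Y =
      3 * R X (b i) (b i) Y + 5 * R X (b i) (J (b i)) (J Y)
        - R X (J (b i)) (b i) (J Y) - R X (J (b i)) (J (b i)) Y :=
    fun i => rstar_pointwise J hJ R hR hRK X Y (b i)
  have hsum : 8 * ricStar J b R X Y =
      3 * ric b R X Y + 5 * ric' J b R X Y
        - (∑ i, R X (J (b i)) (b i) (J Y)) - (∑ i, R X (J (b i)) (J (b i)) Y) := by
    rw [ricStar, Finset.mul_sum, Finset.sum_congr rfl fun i _ => hpt i]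
    rw [ric, ric', Finset.mul_sum, Finset.mul_sum]
    rw [Finset.sum_sub_distrib, Finset.sum_sub_distrib, Finset.sum_add_distrib]
  rw [F1, F2] at hsum
  linarith
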